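/- Let a, d be strictly negative real numbers, p a complex number with a·d > |p|², and τ > 0 a real number. Then both eigenvalues of the 2×2 complex matrix [[a, p], [τ·conj(p), τ·d]] have strictly negative real part. -/

import Mathlib

open Matrix

theorem stmt15 (a d : ℝ) (ha : a < 0) (hd : d < 0) (p : ℂ)
    (hp : ‖p‖ ^ 2 < a * d) (τ : ℝ) (hτ : 0 < τ) :
    ∀ μ ∈ spectrum ℂ !![(a : ℂ), p; (τ : ℂ) * (starRingEnd ℂ) p, (τ : ℂ) * (d : ℂ)],
      μ.re < 0 := by
  intro μ hμ
  have hM := spectrum.mem_iff.mp hμ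
  rw [Matrix.isUnit_iff_isUnit_det] at hM
  have hdet : ((algebraMap ℂ (Matrix (Fin 2) (Fin 2) ℂ)) μ -
      !![(a : ℂ), p; (τ : ℂ) * (starRingEnd ℂ) p, (τ : ℂ) * (d : ℂ)]).det = 0 := by
    by_contra h
    exact hM (isUnit_iff_ne_zero.mpr h)
  rw [Matrix.det_fin_two] at hdet
  simp only [Matrix.sub_apply, Matrix.algebraMap_matrix_apply, Matrix.cons_val',
    Matrix.cons_val_zero, Matrix.cons_val_one, Matrix.head_cons, Matrix.head_fin_const,
    Matrix.empty_val', Matrix.cons_val_fin_one, if_true, if_neg (by decide : ¬(0:Fin 2) = 1),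
    if_neg (by decide : ¬(1:Fin 2) = 0)] at hdet
  -- hdet : (μ - a) * (μ - 0 - τ*d) ... normalize
  have hn : (Complex.normSq p : ℝ) < a * d := by
    rwa [← Complex.sq_norm]
  set x := μ.re
  set y := μ.im
  have hre : (x - a) * (x - τ * d) - y * y - τ * Complex.normSq p = 0 := by
    have := congrArg Complex.re hdet
    simp [Complex.normSq_apply, Complex.sub_re, Complex.mul_re, Complex.mul_im,
      Complex.conj_re, Complex.conj_im, Complex.ofReal_re, Complex.ofReal_im] at this ⊢
    ring_nf at this ⊢
    linarith
  have him : y * (2 * x - a - τ * d) = 0 := by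
    have := congrArg Complex.im hdet
    simp [Complex.sub_im, Complex.mul_re, Complex.mul_im,
      Complex.conj_re, Complex.conj_im, Complex.ofReal_re, Complex.ofReal_im] at this
    linear_combination this
  rcases mul_eq_zero.mp him with hy | hx
  · rw [hy] at hre
    nlinarith [hre, mul_lt_mul_of_pos_left hn hτ, sq_nonneg x,
      mul_neg_of_pos_of_neg hτ hd, Complex.normSq_nonneg p]
  · nlinarith [mul_pos (neg_pos.mpr hd) hτ]
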